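/- Let k,r,n be integers with 3 ≤ k < r < n satisfying 2(n-r+k-1) ≤ n ≤ C(n-r+k-1, k-1) + n-r+k-1. Then there exists a primitive uniquely K_r^(k)-saturated hypergraph on n vertices. -/

import Mathlib

open Finset

/-- The edge set `E` is `k`-uniform. -/
def Uniform (n k : ℕ) (E : Finset (Finset (Fin n))) : Prop :=
  ∀ e ∈ E, e.card = k

/-- `H` contains a copy of the complete `k`-uniform hypergraph on `r` vertices. -/
def HasClique (n k r : ℕ) (E : Finset (Finset (Fin n))) : Prop :=
  ∃ Q : Finset (Fin n), Q.card = r ∧ ∀ T ⊆ Q, T.card = k → T ∈ E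

/-- `H` is uniquely `K_r^(k)`-saturated: it has no `K_r^(k)`, and adding any
non-edge `k`-set `S` creates exactly one copy of `K_r^(k)`. -/
def UniquelySat (n k r : ℕ) (E : Finset (Finset (Fin n))) : Prop :=
  ¬ HasClique n k r E ∧
  ∀ S : Finset (Fin n), S.card = k → S ∉ E →
    ∃! Q : Finset (Fin n), Q.card = r ∧ ∀ T ⊆ Q, T.card = k → (T ∈ E ∨ T = S)

/-- `H` has no dominating vertex. -/
def Primitive (n k : ℕ) (E : Finset (Finset (Fin n))) : Prop :=
  ¬ ∃ v : Fin n, ∀ S : Finset (Fin n), S.card = k → v ∈ S → S ∈ E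

/-- `H` is a primitive uniquely `K_r^(k)`-saturated `k`-uniform hypergraph. -/
def IsPUS (n k r : ℕ) (E : Finset (Finset (Fin n))) : Prop :=
  Uniform n k E ∧ UniquelySat n k r E ∧ Primitive n k E



open Finset

namespace PUS

variable {m : ℕ}

def csum (A : Finset (Fin m)) : ZMod m := ∑ a ∈ A, ((a : ℕ) : ZMod m)

lemma cast_inj [NeZero m] {a b : Fin m} (h : ((a:ℕ) : ZMod m) = ((b:ℕ) : ZMod m)) : a = b := by
  have := congrArg ZMod.val h
  rwa [ZMod.val_cast_of_lt a.isLt, ZMod.val_cast_of_lt b.isLt, ← Fin.ext_iff] at this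

lemma csum_insert {A : Finset (Fin m)} {a : Fin m} (ha : a ∉ A) :
    csum (insert a A) = ((a:ℕ):ZMod m) + csum A := Finset.sum_insert ha

lemma csum_spread {k : ℕ} (hk : 3 ≤ k) (T' : Finset (Fin m)) (hT' : k ≤ T'.card) :
    T'.card + 3 ≤ ((T'.powersetCard (k-1)).image csum).card + k := by
  have hmT : T'.card ≤ m := by simpa using Finset.card_le_univ T'
  haveI : NeZero m := ⟨by omega⟩
  set s := T'.card with hs
  set Γ := (T'.powersetCard (k-1)).image csum with hΓ
  -- star sets
  set St : Finset (Fin m) → Finset (ZMod m) :=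
    fun F => (T' \ F).image (fun u : Fin m => csum F + ((u:ℕ):ZMod m)) with hSt
  have hstar_card : ∀ F ⊆ T', (St F).card = s - F.card := by
    intro F hF
    rw [hSt]
    rw [Finset.card_image_of_injOn, Finset.card_sdiff_of_subset hF]
    intro a _ b _ hab
    exact cast_inj (by simpa using hab)
  have hstar_sub : ∀ F ⊆ T', F.card = k - 2 → St F ⊆ Γ := by
    intro F hF hFc x hx
    rw [hSt] at hx
    simp only [Finset.mem_image, Finset.mem_sdiff] at hx
    obtain ⟨u, ⟨huT, huF⟩, rfl⟩ := hx
    rw [hΓ]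
    refine Finset.mem_image.2 ⟨insert u F, ?_, ?_⟩
    · rw [Finset.mem_powersetCard]
      exact ⟨Finset.insert_subset huT hF, by rw [Finset.card_insert_of_notMem huF, hFc]; omega⟩
    · rw [csum_insert huF, add_comm]
  by_contra hcon
  push_neg at hcon
  -- Γ.card = s - k + 2 exactly
  obtain ⟨F₀, hF₀T, hF₀c⟩ := Finset.exists_subset_card_eq (s := T') (n := k-2) (by omega)
  have hlow : s - (k-2) ≤ Γ.card := by
    rw [← hF₀c, ← hstar_card F₀ hF₀T]
    exact Finset.card_le_card (hstar_sub F₀ hF₀T hF₀c)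
  have hΓcard : Γ.card = s - k + 2 := by omega
  have hstar_eq : ∀ F ⊆ T', F.card = k - 2 → St F = Γ := by
    intro F hF hFc
    refine Finset.eq_of_subset_of_card_le (hstar_sub F hF hFc) ?_
    rw [hstar_card F hF, hFc, hΓcard]; omega
  -- key congruence
  set q := s - k + 1 with hq
  have key : ∀ a ∈ T', ∀ b ∈ T',
      ((q : ℕ) : ZMod m) * (((a:ℕ):ZMod m) - ((b:ℕ):ZMod m)) = 0 := by
    intro a ha b hb
    rcases eq_or_ne a b with rfl | hab
    · simp
    obtain ⟨G, hGsub, hGc⟩ := Finset.exists_subset_card_eq (s := T' \ {a,b}) (n := k-3)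
      (by rw [Finset.card_sdiff_of_subset (by simp [Finset.insert_subset_iff, ha, hb])]
          simp [Finset.card_insert_of_notMem, hab]; omega)
    have haG : a ∉ G := fun h => by simpa using (hGsub h)
    have hbG : b ∉ G := fun h => by simpa using (hGsub h)
    have hGT : G ⊆ T' := hGsub.trans (Finset.sdiff_subset)
    have hF₁ : insert a G ⊆ T' := Finset.insert_subset ha hGT
    have hF₂ : insert b G ⊆ T' := Finset.insert_subset hb hGT
    have hF₁c : (insert a G).card = k - 2 := by
      rw [Finset.card_insert_of_notMem haG, hGc]; omega
    have hF₂c : (insert b G).card = k - 2 := by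
      rw [Finset.card_insert_of_notMem hbG, hGc]; omega
    have hEq : St (insert a G) = St (insert b G) := by
      rw [hstar_eq _ hF₁ hF₁c, hstar_eq _ hF₂ hF₂c]
    -- sum over star sets
    have hsum : ∀ F ⊆ T', (∑ x ∈ St F, x) =
        (s - F.card) • csum F + ((∑ u ∈ T', ((u:ℕ):ZMod m)) - csum F) := by
      intro F hF
      rw [hSt]
      rw [Finset.sum_image (by intro x _ y _ h; exact cast_inj (by simpa using h))]
      rw [Finset.sum_add_distrib, Finset.sum_const, Finset.card_sdiff_of_subset hF]
      congr 1
      rw [Finset.sum_sdiff_eq_sub hF]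
      rfl
    have h1 := hsum (insert a G) hF₁
    have h2 := hsum (insert b G) hF₂
    rw [hEq, h2, hF₂c] at h1
    rw [hF₁c] at h1
    rw [csum_insert haG, csum_insert hbG] at h1
    simp only [nsmul_eq_mul] at h1
    have hsk : (s - (k-2) : ℕ) = q + 1 := by omega
    rw [hsk] at h1
    push_cast at h1 ⊢
    linear_combination -h1
  -- derive contradiction
  obtain ⟨b₀, hb₀⟩ : T'.Nonempty := Finset.card_pos.1 (by omega)
  have hq1 : 1 ≤ q := by omega
  set g := Nat.gcd q m with hg
  have hgq : g ∣ q := Nat.gcd_dvd_left q m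
  have hgm : g ∣ m := Nat.gcd_dvd_right q m
  have hg0 : 0 < g := Nat.gcd_pos_of_pos_left m hq1
  set d := m / g with hd
  have hmgd : m = g * d := (Nat.mul_div_cancel' hgm).symm
  have hd0 : 0 < d := by
    rcases Nat.eq_zero_or_pos d with h | h
    · exfalso; rw [h, mul_zero] at hmgd; omega
    · exact h
  have hcop : Nat.Coprime (q / g) d := Nat.coprime_div_gcd_div_gcd hg0
  have hmod : ∀ a ∈ T', (a : ℕ) % d = (b₀ : ℕ) % d := by
    intro a ha
    have h0 : (((q : ℤ) * ((a:ℕ) - (b₀:ℕ)) : ℤ) : ZMod m) = 0 := by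
      push_cast
      rw [mul_sub]
      have := key a ha b₀ hb₀
      push_cast at this
      linear_combination this
    rw [ZMod.intCast_zmod_eq_zero_iff_dvd] at h0
    -- (m:ℤ) ∣ q * (a - b₀)
    have hq' : (q : ℤ) = (g : ℤ) * ((q / g : ℕ) : ℤ) := by
      rw [← Nat.cast_mul, Nat.mul_div_cancel' hgq]
    have hm' : (m : ℤ) = (g : ℤ) * (d : ℤ) := by exact_mod_cast hmgd
    rw [hm', hq', mul_assoc] at h0
    have h1 : (d : ℤ) ∣ ((q / g : ℕ) : ℤ) * ((a:ℕ) - (b₀:ℕ)) :=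
      (mul_dvd_mul_iff_left (by exact_mod_cast hg0.ne' : (g:ℤ) ≠ 0)).1 h0
    have hco : IsCoprime (d : ℤ) (((q / g : ℕ)) : ℤ) := by
      rw [Int.isCoprime_iff_gcd_eq_one, Int.gcd_natCast_natCast]
      exact Nat.coprime_comm.1 hcop
    have h4 : (d : ℤ) ∣ ((a:ℕ) - (b₀:ℕ) : ℤ) := hco.dvd_of_dvd_mul_left h1
    obtain ⟨c, hc⟩ := h4
    have : ((a:ℕ) : ℤ) = (b₀:ℕ) + d * c := by linarith [hc]
    have h5 : ((a:ℕ) : ℤ) % d = ((b₀:ℕ) : ℤ) % d := by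
      rw [this, Int.add_mul_emod_self_left]
    have h6 : (((a:ℕ) % d : ℕ) : ℤ) = (((b₀:ℕ) % d : ℕ) : ℤ) := by
      push_cast
      exact h5
    exact_mod_cast h6
  have hinj : Set.InjOn (fun a : Fin m => (a:ℕ) / d) T' := by
    intro a ha b hb hab
    simp only at hab
    have : (a:ℕ) = (b:ℕ) := by
      calc (a:ℕ) = d * ((a:ℕ)/d) + (a:ℕ) % d := (Nat.div_add_mod _ _).symm
      _ = d * ((b:ℕ)/d) + (b:ℕ) % d := by rw [hab, hmod a ha, hmod b hb]
      _ = (b:ℕ) := Nat.div_add_mod _ _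
    exact Fin.ext this
  have hmaps : ∀ a ∈ T', (a:ℕ) / d ∈ Finset.range g := by
    intro a _
    rw [Finset.mem_range, Nat.div_lt_iff_lt_mul hd0]
    calc (a:ℕ) < m := a.isLt
    _ = g * d := hmgd
  have := Finset.card_le_card_of_injOn _ hmaps hinj
  rw [Finset.card_range] at this
  have hgle : g ≤ q := Nat.gcd_le_left m hq1
  omega


/-- embedding of the index vertices -/
def xe {m p : ℕ} : Fin m ↪ Fin (m + p) :=
  ⟨fun i => ⟨i.val, by omega⟩, fun a b h => Fin.ext (by simpa using congrArg Fin.val h)⟩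

@[simp] lemma xe_val {m p : ℕ} (i : Fin m) : ((xe (p := p)) i).val = i.val := rfl

structure Setup (k m p : ℕ) where
  vm : Finset (Fin m) → Fin (m + p)
  phi : Fin (m + p) → ZMod m
  hvm : ∀ A : Finset (Fin m), A.card = k - 1 → m ≤ (vm A).val ∧ phi (vm A) = csum A
  hsurj : ∀ w : Fin (m + p), m ≤ w.val → ∃ A : Finset (Fin m), A.card = k - 1 ∧ vm A = w

lemma setup_exists (k m p : ℕ) (hk : 3 ≤ k) (hkm : k ≤ m) (hmp : m ≤ p)
    (hpc : p ≤ m.choose (k-1)) : Nonempty (Setup k m p) := by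
  classical
  haveI : NeZero m := ⟨by omega⟩
  set P : Finset (Finset (Fin m)) := (univ : Finset (Fin m)).powersetCard (k-1) with hP
  have hPcard : P.card = m.choose (k-1) := by
    rw [hP, Finset.card_powersetCard, Finset.card_univ, Fintype.card_fin]
  set Γ : Finset (ZMod m) := P.image csum with hΓ
  have hΓle : Γ.card ≤ m := by
    calc Γ.card ≤ Fintype.card (ZMod m) := Finset.card_le_univ Γ
    _ = m := ZMod.card m
  set rep : ZMod m → Finset (Fin m) :=
    fun γ => if h : ∃ A ∈ P, csum A = γ then h.choose else ∅ with hrepdef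
  have hrep : ∀ γ ∈ Γ, rep γ ∈ P ∧ csum (rep γ) = γ := by
    intro γ hγ
    rw [hΓ, Finset.mem_image] at hγ
    obtain ⟨A, hA, hAe⟩ := hγ
    have h : ∃ A ∈ P, csum A = γ := ⟨A, hA, hAe⟩
    rw [hrepdef]
    simp only [dif_pos h]
    exact ⟨h.choose_spec.1, h.choose_spec.2⟩
  set R : Finset (Finset (Fin m)) := Γ.image rep with hR
  have hRP : R ⊆ P := by
    intro A hA
    rw [hR, Finset.mem_image] at hA
    obtain ⟨γ, hγ, rfl⟩ := hA
    exact (hrep γ hγ).1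
  have hRle : R.card ≤ p := le_trans (le_trans Finset.card_image_le hΓle) hmp
  obtain ⟨T, hRT, hTP, hTcard⟩ :=
    Finset.exists_subsuperset_card_eq hRP hRle (by rw [hPcard]; exact hpc)
  -- the "label" vertices
  set Uset : Finset (Fin (m+p)) := (univ : Finset (Fin (m+p))).filter (fun w => m ≤ w.val)
    with hUset
  have hUcard : Uset.card = p := by
    have hemb : Function.Injective (fun j : Fin p => (⟨m + j.val, by omega⟩ : Fin (m+p))) := by
      intro a b h
      have : m + a.val = m + b.val := congrArg Fin.val h
      exact Fin.ext (by omega)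
    have himg : Finset.image (fun j : Fin p => (⟨m + j.val, by omega⟩ : Fin (m+p)))
        Finset.univ = Uset := by
      ext w
      constructor
      · intro hw
        obtain ⟨j, -, rfl⟩ := Finset.mem_image.1 hw
        rw [hUset]
        refine Finset.mem_filter.2 ⟨Finset.mem_univ _, ?_⟩
        show m ≤ m + j.val
        omega
      · intro hw
        have hm : m ≤ w.val := (Finset.mem_filter.1 hw).2
        refine Finset.mem_image.2 ⟨⟨w.val - m, by omega⟩, Finset.mem_univ _, ?_⟩
        exact Fin.ext (by show m + (w.val - m) = w.val; omega)
    rw [← himg, Finset.card_image_of_injective _ hemb, Finset.card_univ, Fintype.card_fin]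
  have hTne : T.Nonempty := Finset.card_pos.1 (by omega)
  obtain ⟨t₀, ht₀⟩ := hTne
  set e : {x // x ∈ Uset} ≃ {A // A ∈ T} := Finset.equivOfCardEq (by rw [hUcard, hTcard])
    with he
  set pick : Finset (Fin m) → {A // A ∈ T} := fun A =>
    if h : A ∈ T then ⟨A, h⟩
    else if h' : rep (csum A) ∈ T then ⟨rep (csum A), h'⟩ else ⟨t₀, ht₀⟩ with hpick
  have hpick_csum : ∀ A ∈ P, csum (pick A : Finset (Fin m)) = csum A := by
    intro A hA
    rw [hpick]
    by_cases h : A ∈ T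
    · simp [dif_pos h]
    · have hγ : csum A ∈ Γ := by rw [hΓ]; exact Finset.mem_image_of_mem _ hA
      have h' : rep (csum A) ∈ T := hRT (by rw [hR]; exact Finset.mem_image_of_mem _ hγ)
      simp only [dif_neg h, dif_pos h']
      exact (hrep _ hγ).2
  set vmfun : Finset (Fin m) → Fin (m+p) := fun A => ((e.symm (pick A)) : Fin (m+p))
    with hvmfun
  set phifun : Fin (m+p) → ZMod m :=
    fun w => if h : w ∈ Uset then csum ((e ⟨w, h⟩ : {A // A ∈ T}) : Finset (Fin m)) else 0
    with hphifun
  have hphi : ∀ x : {x // x ∈ Uset}, phifun (x : Fin (m+p)) = csum ((e x : {A // A ∈ T}) : Finset (Fin m)) := by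
    intro x
    rw [hphifun]
    simp only []
    rw [dif_pos x.2, Subtype.coe_eta]
  refine ⟨⟨vmfun, phifun, ?_, ?_⟩⟩
  · intro A hA
    have hAP : A ∈ P := by
      rw [hP, Finset.mem_powersetCard]; exact ⟨Finset.subset_univ _, hA⟩
    have hmem : ((e.symm (pick A)) : Fin (m+p)) ∈ Uset := (e.symm (pick A)).2
    have hval : m ≤ ((e.symm (pick A)) : Fin (m+p)).val := (Finset.mem_filter.1 hmem).2
    refine ⟨hval, ?_⟩
    have h1 : phifun (vmfun A) = csum ((e (e.symm (pick A)) : {A // A ∈ T}) : Finset (Fin m)) :=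
      hphi (e.symm (pick A))
    rw [h1, Equiv.apply_symm_apply]
    exact hpick_csum A hAP
  · intro w hw
    have hwU : w ∈ Uset := by rw [hUset]; exact Finset.mem_filter.2 ⟨Finset.mem_univ _, hw⟩
    set A : Finset (Fin m) := ((e ⟨w, hwU⟩ : {A // A ∈ T}) : Finset (Fin m)) with hA
    have hAT : A ∈ T := (e ⟨w, hwU⟩).2
    have hAP : A ∈ P := hTP hAT
    have hAcard : A.card = k - 1 := by
      rw [hP, Finset.mem_powersetCard] at hAP
      exact hAP.2
    refine ⟨A, hAcard, ?_⟩
    have hpa : pick A = e ⟨w, hwU⟩ := by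
      rw [hpick]
      simp only [dif_pos hAT]
      rfl
    have : vmfun A = ((e.symm (e ⟨w, hwU⟩)) : Fin (m+p)) := by rw [hvmfun]; simp only []; rw [hpa]
    rw [this, Equiv.symm_apply_apply]





variable {k m p : ℕ}

def NE (S : Setup k m p) (A : Finset (Fin m)) : Finset (Fin (m+p)) :=
  A.map xe ∪ {S.vm A}

lemma vm_mem_NE (S : Setup k m p) (A : Finset (Fin m)) : S.vm A ∈ NE S A :=
  Finset.mem_union_right _ (Finset.mem_singleton_self _)

lemma xe_mem_NE (S : Setup k m p) {A : Finset (Fin m)} {i : Fin m} (h : i ∈ A) :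
    xe i ∈ NE S A := Finset.mem_union_left _ (Finset.mem_map_of_mem _ h)

lemma mem_map_lt {A : Finset (Fin m)} {w : Fin (m+p)} (h : w ∈ A.map xe) : w.val < m := by
  obtain ⟨i, _, rfl⟩ := Finset.mem_map.1 h
  exact i.isLt

lemma NE_card (S : Setup k m p) (hk : 3 ≤ k) {A : Finset (Fin m)} (hA : A.card = k-1) :
    (NE S A).card = k := by
  rw [NE, Finset.card_union_of_disjoint, Finset.card_map, Finset.card_singleton, hA]
  · omega
  · rw [Finset.disjoint_singleton_right]
    intro hmem
    have h1 := mem_map_lt hmem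
    have h2 := (S.hvm A hA).1
    omega

lemma NE_subset_inj (S : Setup k m p) {A A' : Finset (Fin m)}
    (hA' : A'.card = k-1) (h : NE S A = NE S A') : A ⊆ A' := by
  intro i hi
  have hx : xe i ∈ NE S A' := h ▸ xe_mem_NE S hi
  rcases Finset.mem_union.1 hx with h1 | h1
  · exact (Finset.mem_map' _).1 h1
  · exfalso
    rw [Finset.mem_singleton] at h1
    have h2 := (S.hvm A' hA').1
    have h3 : (xe (p := p) i).val = i.val := rfl
    rw [h1] at h3
    have := i.isLt
    omega

lemma NE_inj (S : Setup k m p) {A A' : Finset (Fin m)} (hA : A.card = k-1)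
    (hA' : A'.card = k-1) (h : NE S A = NE S A') : A = A' :=
  Finset.eq_of_subset_of_card_le (NE_subset_inj S hA' h) (by omega)

lemma vm_spread (S : Setup k m p) (hk : 3 ≤ k) (T' : Finset (Fin m)) (hT' : k ≤ T'.card) :
    T'.card + 3 ≤ ((T'.powersetCard (k-1)).image S.vm).card + k := by
  have himg : ((T'.powersetCard (k-1)).image S.vm).image S.phi
      = (T'.powersetCard (k-1)).image csum := by
    rw [Finset.image_image]
    apply Finset.image_congr
    intro A hA
    rw [Finset.mem_coe, Finset.mem_powersetCard] at hA
    exact (S.hvm A hA.2).2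
  have h1 := csum_spread hk T' hT'
  rw [← himg] at h1
  have h2 := Finset.card_image_le
    (s := (T'.powersetCard (k-1)).image S.vm) (f := S.phi)
  omega

def Iset (p : ℕ) (B : Finset (Fin (m+p))) : Finset (Fin m) :=
  Finset.univ.filter (fun i => xe i ∈ B)

lemma Iset_image (B : Finset (Fin (m+p))) :
    (Iset p B).image (xe : Fin m ↪ Fin (m+p)) = B.filter (fun w => w.val < m) := by
  ext w
  simp only [Finset.mem_image, Finset.mem_filter, Iset, Finset.mem_univ, true_and]
  constructor
  · rintro ⟨i, hiB, rfl⟩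
    exact ⟨hiB, i.isLt⟩
  · rintro ⟨hwB, hwm⟩
    have hxe : (xe ⟨w.val, hwm⟩ : Fin (m+p)) = w := Fin.ext rfl
    exact ⟨⟨w.val, hwm⟩, by rw [hxe]; exact hwB, hxe⟩

lemma Iset_card (B : Finset (Fin (m+p))) :
    (Iset p B).card + (B.filter (fun w => ¬ w.val < m)).card = B.card := by
  have h1 : ((Iset p B).image (xe : Fin m ↪ Fin (m+p))).card = (Iset p B).card :=
    Finset.card_image_of_injective _ (xe : Fin m ↪ Fin (m+p)).injective
  rw [Iset_image] at h1
  rw [← h1]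
  exact Finset.card_filter_add_card_filter_not _

theorem aux (k m p : ℕ) (hk : 3 ≤ k) (hkm : k ≤ m) (hmp : m ≤ p)
    (hpc : p ≤ m.choose (k-1)) :
    ∃ E : Finset (Finset (Fin (m+p))), IsPUS (m+p) k (p+k-1) E := by
  classical
  obtain ⟨S⟩ := setup_exists k m p hk hkm hmp hpc
  set F : Finset (Finset (Fin (m+p))) :=
    ((Finset.univ : Finset (Fin m)).powersetCard (k-1)).image (NE S) with hF
  set E : Finset (Finset (Fin (m+p))) :=
    (Finset.univ : Finset (Fin (m+p))).powersetCard k \ F with hE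
  have hmemF : ∀ {A : Finset (Fin m)}, A.card = k-1 → NE S A ∈ F := by
    intro A hA
    rw [hF]
    exact Finset.mem_image_of_mem _
      (Finset.mem_powersetCard.2 ⟨Finset.subset_univ _, hA⟩)
  have hFE : ∀ {X : Finset (Fin (m+p))}, X ∈ F → X ∉ E := by
    intro X hX hXE
    rw [hE, Finset.mem_sdiff] at hXE
    exact hXE.2 hX
  have hnotE : ∀ {X : Finset (Fin (m+p))}, X.card = k → X ∉ E → X ∈ F := by
    intro X hX hXE
    by_contra h
    refine hXE ?_
    rw [hE, Finset.mem_sdiff]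
    exact ⟨Finset.mem_powersetCard.2 ⟨Finset.subset_univ _, hX⟩, h⟩
  -- transversal lemma : every (m-k+1)-set misses some non-edge
  have trans : ∀ B : Finset (Fin (m+p)), B.card = m - k + 1 →
      ∃ A : Finset (Fin m), A.card = k-1 ∧ Disjoint (NE S A) B := by
    intro B hB
    set I := Iset p B with hI
    have hIW := Iset_card B
    rw [← hI] at hIW
    by_cases hc : I.card = m - k + 1
    · have hW : B.filter (fun w => ¬ w.val < m) = ∅ := Finset.card_eq_zero.1 (by omega)
      have hIcc : (Iᶜ).card = k - 1 := by
        rw [Finset.card_compl, Fintype.card_fin, hc]; omega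
      refine ⟨Iᶜ, hIcc, Finset.disjoint_left.2 ?_⟩
      intro w hw hwB
      rcases Finset.mem_union.1 hw with h1 | h1
      · obtain ⟨i, hi, rfl⟩ := Finset.mem_map.1 h1
        exact (Finset.mem_compl.1 hi) (Finset.mem_filter.2 ⟨Finset.mem_univ _, hwB⟩)
      · rw [Finset.mem_singleton] at h1
        subst h1
        have hval := (S.hvm _ hIcc).1
        have hmem2 : S.vm Iᶜ ∈ B.filter (fun w => ¬ w.val < m) :=
          Finset.mem_filter.2 ⟨hwB, by omega⟩
        rw [hW] at hmem2
        exact absurd hmem2 (Finset.notMem_empty _)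
    · have hIlt : I.card ≤ m - k := by omega
      have hcompl : (Iᶜ).card = m - I.card := by
        rw [Finset.card_compl, Fintype.card_fin]
      have hTc : k ≤ (Iᶜ).card := by omega
      have hsp := vm_spread S hk Iᶜ hTc
      have hnsub : ¬ (((Iᶜ).powersetCard (k-1)).image S.vm
          ⊆ B.filter (fun w => ¬ w.val < m)) := by
        intro hsub
        have := Finset.card_le_card hsub
        omega
      obtain ⟨x, hx, hxW⟩ := Finset.not_subset.1 hnsub
      obtain ⟨A, hAmem, rfl⟩ := Finset.mem_image.1 hx
      rw [Finset.mem_powersetCard] at hAmem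
      refine ⟨A, hAmem.2, Finset.disjoint_left.2 ?_⟩
      intro w hw hwB
      rcases Finset.mem_union.1 hw with h1 | h1
      · obtain ⟨i, hi, rfl⟩ := Finset.mem_map.1 h1
        exact (Finset.mem_compl.1 (hAmem.1 hi))
          (Finset.mem_filter.2 ⟨Finset.mem_univ _, hwB⟩)
      · rw [Finset.mem_singleton] at h1
        subst h1
        have hval := (S.hvm _ hAmem.2).1
        exact hxW (Finset.mem_filter.2 ⟨hwB, by omega⟩)
  -- uniqueness lemma
  have uniq : ∀ A : Finset (Fin m), A.card = k-1 → ∀ B : Finset (Fin (m+p)),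
      B.card = m - k + 1 → Disjoint (NE S A) B →
      (∀ A' : Finset (Fin m), A'.card = k-1 → A' ≠ A → ¬ Disjoint (NE S A') B) →
      B = (Aᶜ).map xe := by
    intro A hA B hB hdisj hall
    set I := Iset p B with hI
    have hIW := Iset_card B
    rw [← hI] at hIW
    have hAI : A ⊆ Iᶜ := by
      intro i hi
      refine Finset.mem_compl.2 (fun hiI => ?_)
      have hxB : xe i ∈ B := (Finset.mem_filter.1 hiI).2
      exact Finset.disjoint_left.1 hdisj (xe_mem_NE S hi) hxB
    have hvmB : S.vm A ∉ B := fun h => Finset.disjoint_left.1 hdisj (vm_mem_NE S A) h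
    have hAIcard : A.card ≤ (Iᶜ).card := Finset.card_le_card hAI
    have hcompl : (Iᶜ).card = m - I.card := by
      rw [Finset.card_compl, Fintype.card_fin]
    have hc : I.card = m - k + 1 := by
      by_contra hc
      have hIlt : I.card ≤ m - k := by omega
      have hTc : k ≤ (Iᶜ).card := by omega
      have hsp := vm_spread S hk Iᶜ hTc
      set V := ((Iᶜ).powersetCard (k-1)).image S.vm with hV
      have hsubW : V \ {S.vm A} ⊆ B.filter (fun w => ¬ w.val < m) := by
        intro x hx
        rw [Finset.mem_sdiff, Finset.mem_singleton] at hx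
        obtain ⟨hxV, hxne⟩ := hx
        obtain ⟨A', hA'mem, rfl⟩ := Finset.mem_image.1 hxV
        rw [Finset.mem_powersetCard] at hA'mem
        have hA'A : A' ≠ A := fun h => hxne (by rw [h])
        have hnd := hall A' hA'mem.2 hA'A
        rw [Finset.not_disjoint_iff] at hnd
        obtain ⟨w, hw1, hw2⟩ := hnd
        rcases Finset.mem_union.1 hw1 with h1 | h1
        · obtain ⟨i, hi, rfl⟩ := Finset.mem_map.1 h1
          have hiI : i ∈ I := Finset.mem_filter.2 ⟨Finset.mem_univ _, hw2⟩
          exact absurd hiI (Finset.mem_compl.1 (hA'mem.1 hi))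
        · rw [Finset.mem_singleton] at h1
          subst h1
          have hval := (S.hvm A' hA'mem.2).1
          exact Finset.mem_filter.2 ⟨hw2, by omega⟩
      have h1 := Finset.card_le_card hsubW
      have h2 : V.card ≤ (V \ {S.vm A}).card + 1 := by
        have h3 := Finset.card_le_card_sdiff_add_card (s := V) (t := {S.vm A})
        simpa using h3
      omega
    have hW : B.filter (fun w => ¬ w.val < m) = ∅ := Finset.card_eq_zero.1 (by omega)
    have hBfil : B.filter (fun w => w.val < m) = B := by
      apply Finset.filter_true_of_mem
      intro w hwB
      by_contra hwm
      have : w ∈ B.filter (fun w => ¬ w.val < m) := Finset.mem_filter.2 ⟨hwB, hwm⟩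
      rw [hW] at this
      exact absurd this (Finset.notMem_empty _)
    have hIA : I = Aᶜ := by
      apply Finset.eq_of_subset_of_card_le
      · intro i hiI
        refine Finset.mem_compl.2 (fun hiA => ?_)
        exact (Finset.mem_compl.1 (hAI hiA)) hiI
      · rw [Finset.card_compl, Fintype.card_fin, hA, hc]
        omega
    calc B = B.filter (fun w => w.val < m) := hBfil.symm
    _ = (Iset p B).image (xe : Fin m ↪ Fin (m+p)) := (Iset_image B).symm
    _ = (Aᶜ).image (xe : Fin m ↪ Fin (m+p)) := by rw [← hI, hIA]
    _ = (Aᶜ).map xe := (Finset.map_eq_image _ _).symm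
  -- cliques-from-subsets helper
  have hcardQc : ∀ Q : Finset (Fin (m+p)), Q.card = p + k - 1 → (Qᶜ).card = m - k + 1 := by
    intro Q hQ
    rw [Finset.card_compl, Fintype.card_fin, hQ]
    omega
  have hsubQ : ∀ {X Q : Finset (Fin (m+p))}, Disjoint X Qᶜ → X ⊆ Q := by
    intro X Q hd w hw
    by_contra h
    exact Finset.disjoint_left.1 hd hw (Finset.mem_compl.2 h)
  have hdisQ : ∀ {X Q : Finset (Fin (m+p))}, X ⊆ Q → Disjoint X Qᶜ := by
    intro X Q hsub
    exact Finset.disjoint_left.2 (fun w hw hwc => (Finset.mem_compl.1 hwc) (hsub hw))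
  have hnoclique : ¬ HasClique (m+p) k (p+k-1) E := by
    rintro ⟨Q, hQc, hQall⟩
    obtain ⟨A, hA, hdis⟩ := trans Qᶜ (hcardQc Q hQc)
    have hsub : NE S A ⊆ Q := hsubQ hdis
    exact hFE (hmemF hA) (hQall _ hsub (NE_card S hk hA))
  refine ⟨E, ?_, ⟨hnoclique, ?_⟩, ?_⟩
  · -- Uniform
    intro e he
    rw [hE, Finset.mem_sdiff] at he
    exact (Finset.mem_powersetCard.1 he.1).2
  · -- saturation
    intro X hXcard hXE
    obtain ⟨A, hAmem, hXA⟩ := Finset.mem_image.1 (hnotE hXcard hXE)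
    have hA : A.card = k - 1 := (Finset.mem_powersetCard.1 hAmem).2
    subst hXA
    set Q : Finset (Fin (m+p)) := ((Aᶜ).map xe)ᶜ with hQ
    have hAc : ((Aᶜ).map (xe : Fin m ↪ Fin (m+p))).card = m - (k-1) := by
      rw [Finset.card_map, Finset.card_compl, Fintype.card_fin, hA]
    have hQcard : Q.card = p + k - 1 := by
      rw [hQ, Finset.card_compl, Fintype.card_fin, hAc]
      omega
    have hQc : Qᶜ = (Aᶜ).map xe := by rw [hQ, compl_compl]
    have hprop : ∀ T ⊆ Q, T.card = k → T ∈ E ∨ T = NE S A := by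
      intro T hTQ hTcard
      by_cases hTE : T ∈ E
      · exact Or.inl hTE
      right
      obtain ⟨A', hA'mem, hTA'⟩ := Finset.mem_image.1 (hnotE hTcard hTE)
      have hA' : A'.card = k - 1 := (Finset.mem_powersetCard.1 hA'mem).2
      subst hTA'
      have hsub' : A' ⊆ A := by
        intro i hi
        have h1 : xe i ∈ Q := hTQ (xe_mem_NE S hi)
        rw [hQ, Finset.mem_compl] at h1
        by_contra hiA
        exact h1 ((Finset.mem_map' _).2 (Finset.mem_compl.2 hiA))
      rw [Finset.eq_of_subset_of_card_le hsub' (by omega)]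
    refine ⟨Q, ⟨hQcard, hprop⟩, ?_⟩
    rintro Q' ⟨hQ'card, hQ'prop⟩
    have hB' : (Q'ᶜ).card = m - k + 1 := hcardQc Q' hQ'card
    have hSQ' : Disjoint (NE S A) Q'ᶜ := by
      obtain ⟨A₀, hA₀, hdis₀⟩ := trans Q'ᶜ hB'
      have hsub₀ : NE S A₀ ⊆ Q' := hsubQ hdis₀
      rcases hQ'prop _ hsub₀ (NE_card S hk hA₀) with h | h
      · exact absurd h (hFE (hmemF hA₀))
      · have : A₀ = A := NE_inj S hA₀ hA h
        subst this
        exact hdis₀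
    have hall : ∀ A' : Finset (Fin m), A'.card = k-1 → A' ≠ A →
        ¬ Disjoint (NE S A') Q'ᶜ := by
      intro A' hA' hne hdis'
      have hsub' : NE S A' ⊆ Q' := hsubQ hdis'
      rcases hQ'prop _ hsub' (NE_card S hk hA') with h | h
      · exact hFE (hmemF hA') h
      · exact hne (NE_inj S hA' hA h)
    have := uniq A hA Q'ᶜ hB' hSQ' hall
    rw [← compl_compl Q', this, ← hQc, compl_compl]
  · -- primitive
    rintro ⟨w, hw⟩
    by_cases hwm : w.val < m
    · obtain ⟨A, hiA, -, hAcard⟩ := Finset.exists_subsuperset_card_eq (n := k - 1)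
        (Finset.subset_univ {(⟨w.val, hwm⟩ : Fin m)})
        (by simp only [Finset.card_singleton]; omega)
        (by simp only [Finset.card_univ, Fintype.card_fin]; omega)
      have hwNE : w ∈ NE S A := by
        have : xe (⟨w.val, hwm⟩ : Fin m) ∈ NE S A :=
          xe_mem_NE S (hiA (Finset.mem_singleton_self _))
        have hxw : (xe (⟨w.val, hwm⟩ : Fin m) : Fin (m+p)) = w := Fin.ext rfl
        rwa [hxw] at this
      exact hFE (hmemF hAcard) (hw (NE S A) (NE_card S hk hAcard) hwNE)
    · obtain ⟨A, hAcard, hvmA⟩ := S.hsurj w (by omega)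
      have hwNE : w ∈ NE S A := hvmA ▸ vm_mem_NE S A
      exact hFE (hmemF hAcard) (hw (NE S A) (NE_card S hk hAcard) hwNE)

end PUS


theorem stmt11 (k r n : ℕ) (hk : 3 ≤ k) (hkr : k < r) (hrn : r < n)
    (h1 : 2 * (n - r + k - 1) ≤ n)
    (h2 : n ≤ Nat.choose (n - r + k - 1) (k - 1) + (n - r + k - 1)) :
    ∃ E : Finset (Finset (Fin n)), IsPUS n k r E := by
  set c := Nat.choose (n - r + k - 1) (k - 1) with hc
  have main := PUS.aux k (n - r + k - 1) (n - (n - r + k - 1)) hk (by omega) (by omega)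
    (by rw [← hc]; omega)
  have hn : n - r + k - 1 + (n - (n - r + k - 1)) = n := by omega
  have hr : n - (n - r + k - 1) + k - 1 = r := by omega
  rw [hn, hr] at main
  exact main
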